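/- arXiv:1902.02271 — 3 statements merged into one kernel-verified Lean document; each statement's English description precedes it below -/
import Mathlib

section
/- Let x_i, x_j, x_k be affinely independent points in a real inner product space. For each edge of the triangle let l denote its length and t the outward unit edge-perpendicular vector of that edge with respect to the triangle (defined via orthogonal projection of the opposite vertex onto the edge's line). Then the edge-normal vectors close up: l_jk · t_jk + l_ki · t_ki + l_ij · t_ij = 0, where l_ab = ‖x_a − x_b‖. -/
open EuclideanGeometry RealInnerProductSpace

private lemma edge_term {E : Type*} [NormedAddCommGroup E] [InnerProductSpace ℝ E]
    (p q r f : E) (hqr : q ≠ r) (hfp : f ≠ p)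
    (hmem : f ∈ affineSpan ℝ {q, r}) (hperp : ⟪p - f, r - q⟫ = 0) :
    ‖q - r‖ • (‖f - p‖⁻¹ • (f - p)) =
      (Real.sqrt (⟪q - p, q - p⟫ * ⟪r - p, r - p⟫ - ⟪q - p, r - p⟫ ^ 2))⁻¹ •
        ((⟪r - p, r - p⟫ - ⟪q - p, r - p⟫) • (q - p) +
         (⟪q - p, q - p⟫ - ⟪q - p, r - p⟫) • (r - p)) := by
  set v : E := q - p with hv
  set w : E := r - p with hw
  set a : ℝ := ⟪v, v⟫ with ha
  set b : ℝ := ⟪w, w⟫ with hb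
  set c : ℝ := ⟪v, w⟫ with hc
  clear_value v w a b c
  have hmem' : (f - q) +ᵥ q ∈ affineSpan ℝ {q, r} := by simpa using hmem
  obtain ⟨t, ht⟩ := vadd_left_mem_affineSpan_pair.mp hmem'
  rw [vsub_eq_sub] at ht
  have hrq : r - q = w - v := by rw [hv, hw]; abel
  have hfp' : f - p = t • (w - v) + v := by
    have h0 : f - p = (f - q) + (q - p) := by abel
    rw [h0, ← ht, hrq, hv]
  have htN : (a + b - 2 * c) * t = a - c := by
    have hpf : p - f = -(t • (w - v)) - v := by
      have h0 : p - f = -(f - p) := by abel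
      rw [h0, hfp']; abel
    rw [hpf, hrq] at hperp
    simp only [inner_sub_left, inner_sub_right, inner_neg_left, real_inner_smul_left] at hperp
    rw [real_inner_comm v w] at hperp
    rw [← ha, ← hb, ← hc] at hperp
    linear_combination -hperp
  have key : (a + b - 2 * c) • (f - p) = (b - c) • v + (a - c) • w := by
    rw [hfp']
    match_scalars
    · linear_combination htN
    · linear_combination -htN
  have hN : ‖q - r‖ ^ 2 = a + b - 2 * c := by
    have h0 : q - r = -(w - v) := by rw [hv, hw]; abel
    rw [← real_inner_self_eq_norm_sq, h0]
    simp only [inner_neg_neg, inner_sub_left, inner_sub_right]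
    rw [real_inner_comm v w, ← ha, ← hb, ← hc]
    ring
  have hqr' : (0:ℝ) < ‖q - r‖ := by
    have : q - r ≠ 0 := sub_ne_zero.mpr hqr
    simpa [norm_pos_iff] using this
  have hNpos : (0:ℝ) < a + b - 2 * c := by rw [← hN]; positivity
  have hfp2 : (0:ℝ) < ‖f - p‖ := by
    have : f - p ≠ 0 := sub_ne_zero.mpr hfp
    simpa [norm_pos_iff] using this
  have hh : (a + b - 2 * c) ^ 2 * ‖f - p‖ ^ 2 = (a * b - c ^ 2) * (a + b - 2 * c) := by
    have h1 : ⟪(a + b - 2 * c) • (f - p), (a + b - 2 * c) • (f - p)⟫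
        = (a + b - 2 * c) ^ 2 * ‖f - p‖ ^ 2 := by
      rw [real_inner_smul_left, real_inner_smul_right, real_inner_self_eq_norm_sq]; ring
    rw [← h1, key]
    simp only [inner_add_left, inner_add_right, real_inner_smul_left, real_inner_smul_right]
    rw [real_inner_comm v w, ← ha, ← hb, ← hc]
    ring
  have hD : a * b - c ^ 2 = (‖q - r‖ * ‖f - p‖) ^ 2 := by
    refine mul_right_cancel₀ (ne_of_gt hNpos) ?_
    rw [mul_pow, hN]
    linear_combination -hh
  have hS : Real.sqrt (a * b - c ^ 2) = ‖q - r‖ * ‖f - p‖ := by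
    rw [hD, Real.sqrt_sq (by positivity)]
  rw [hS, ← key, smul_smul, smul_smul]
  congr 1
  rw [mul_inv]
  have hN' : (a + b - 2 * c) = ‖q - r‖ ^ 2 := hN.symm
  rw [hN']
  field_simp

/-- For a nondegenerate triangle `xi xj xk` in a real inner product space, with `f_jk`, `f_ki`,
`f_ij` the orthogonal projections of the vertex opposite each edge onto the line of that edge
(characterized by affine-span membership and orthogonality to the edge direction), the
length-weighted outward unit edge-perpendicular vectors close up:
`l_jk • t_jk + l_ki • t_ki + l_ij • t_ij = 0`. -/
theorem edge_normals_close_up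
    {E : Type*} [NormedAddCommGroup E] [InnerProductSpace ℝ E]
    (xi xj xk f_jk f_ki f_ij : E)
    (hind : AffineIndependent ℝ ![xi, xj, xk])
    (hmem_jk : f_jk ∈ affineSpan ℝ {xj, xk})
    (hperp_jk : ⟪xi - f_jk, xk - xj⟫ = 0)
    (hmem_ki : f_ki ∈ affineSpan ℝ {xk, xi})
    (hperp_ki : ⟪xj - f_ki, xi - xk⟫ = 0)
    (hmem_ij : f_ij ∈ affineSpan ℝ {xi, xj})
    (hperp_ij : ⟪xk - f_ij, xj - xi⟫ = 0) :
    ‖xj - xk‖ • (‖f_jk - xi‖⁻¹ • (f_jk - xi)) +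
    ‖xk - xi‖ • (‖f_ki - xj‖⁻¹ • (f_ki - xj)) +
    ‖xi - xj‖ • (‖f_ij - xk‖⁻¹ • (f_ij - xk)) = 0 := by
  have hne01 : xi ≠ xj := by
    have := hind.injective.ne (show (0 : Fin 3) ≠ 1 by decide)
    simpa using this
  have hne12 : xj ≠ xk := by
    have := hind.injective.ne (show (1 : Fin 3) ≠ 2 by decide)
    simpa using this
  have hne20 : xk ≠ xi := by
    have := hind.injective.ne (show (2 : Fin 3) ≠ 0 by decide)
    simpa using this
  have hnmem_i : xi ∉ affineSpan ℝ ({xj, xk} : Set E) := by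
    intro h
    have himg : ![xi, xj, xk] '' ({1, 2} : Set (Fin 3)) = {xj, xk} := by
      simp [Set.image_insert_eq]
    have := (hind.mem_affineSpan_iff 0 {1, 2}).mp (by rw [himg]; simpa using h)
    simp at this
  have hnmem_j : xj ∉ affineSpan ℝ ({xk, xi} : Set E) := by
    intro h
    have himg : ![xi, xj, xk] '' ({2, 0} : Set (Fin 3)) = {xk, xi} := by
      simp [Set.image_insert_eq]
    have := (hind.mem_affineSpan_iff 1 {2, 0}).mp (by rw [himg]; simpa using h)
    simp at this
  have hnmem_k : xk ∉ affineSpan ℝ ({xi, xj} : Set E) := by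
    intro h
    have himg : ![xi, xj, xk] '' ({0, 1} : Set (Fin 3)) = {xi, xj} := by
      simp [Set.image_insert_eq]
    have := (hind.mem_affineSpan_iff 2 {0, 1}).mp (by rw [himg]; simpa using h)
    simp at this
  have hf1 : f_jk ≠ xi := fun h => hnmem_i (h ▸ hmem_jk)
  have hf2 : f_ki ≠ xj := fun h => hnmem_j (h ▸ hmem_ki)
  have hf3 : f_ij ≠ xk := fun h => hnmem_k (h ▸ hmem_ij)
  rw [edge_term xi xj xk f_jk hne12 hf1 hmem_jk hperp_jk,
      edge_term xj xk xi f_ki hne20 hf2 hmem_ki hperp_ki,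
      edge_term xk xi xj f_ij hne01 hf3 hmem_ij hperp_ij]
  have e1 : xk - xj = (xk - xi) - (xj - xi) := by abel
  have e2 : xi - xj = -(xj - xi) := by abel
  have e3 : xj - xk = (xj - xi) - (xk - xi) := by abel
  have e4 : xi - xk = -(xk - xi) := by abel
  have hD2 : ⟪xk - xj, xk - xj⟫ * ⟪xi - xj, xi - xj⟫ - ⟪xk - xj, xi - xj⟫ ^ 2
      = ⟪xj - xi, xj - xi⟫ * ⟪xk - xi, xk - xi⟫ - ⟪xj - xi, xk - xi⟫ ^ 2 := by
    rw [e1, e2]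
    simp only [inner_sub_left, inner_sub_right, inner_neg_left, inner_neg_right]
    simp only [real_inner_comm xi xj, real_inner_comm xi xk, real_inner_comm xj xk]
    ring
  have hD3 : ⟪xi - xk, xi - xk⟫ * ⟪xj - xk, xj - xk⟫ - ⟪xi - xk, xj - xk⟫ ^ 2
      = ⟪xj - xi, xj - xi⟫ * ⟪xk - xi, xk - xi⟫ - ⟪xj - xi, xk - xi⟫ ^ 2 := by
    rw [e3, e4]
    simp only [inner_sub_left, inner_sub_right, inner_neg_left, inner_neg_right]
    simp only [real_inner_comm xi xj, real_inner_comm xi xk, real_inner_comm xj xk]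
    ring
  rw [hD2, hD3, ← smul_add, ← smul_add]
  rw [show
    ((⟪xk - xi, xk - xi⟫ - ⟪xj - xi, xk - xi⟫) • (xj - xi) +
        (⟪xj - xi, xj - xi⟫ - ⟪xj - xi, xk - xi⟫) • (xk - xi) +
      ((⟪xi - xj, xi - xj⟫ - ⟪xk - xj, xi - xj⟫) • (xk - xj) +
        (⟪xk - xj, xk - xj⟫ - ⟪xk - xj, xi - xj⟫) • (xi - xj)) +
      ((⟪xj - xk, xj - xk⟫ - ⟪xi - xk, xj - xk⟫) • (xi - xk) +
        (⟪xi - xk, xi - xk⟫ - ⟪xi - xk, xj - xk⟫) • (xj - xk))) = (0 : E) by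
    rw [e1, e2, e3, e4]
    simp only [inner_sub_left, inner_sub_right, inner_neg_left, inner_neg_right]
    simp only [real_inner_comm xi xj, real_inner_comm xi xk, real_inner_comm xj xk]
    module]
  rw [smul_zero]
end

section
/- Let x_i, x_j, x_k be affinely independent points in a real inner product space, with interior angles α_j = ∠(x_i, x_j, x_k) at x_j and α_k = ∠(x_i, x_k, x_j) at x_k. Let x_f be the orthogonal projection of x_i onto the line through x_j and x_k, set t_jk = (x_f − x_i)/‖x_f − x_i‖ and l_jk = ‖x_j − x_k‖. Then the cotangent identity l_jk • t_jk = cot(α_k) • (x_j − x_i) + cot(α_j) • (x_k − x_i) holds, where cot α = cos α / sin α. -/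
open EuclideanGeometry RealInnerProductSpace

lemma cot_angle_formula {E : Type*} [NormedAddCommGroup E] [InnerProductSpace ℝ E]
    (f v : E) (t : ℝ) (hfv : ⟪f, v⟫ = 0) (hf : f ≠ 0) (hv : v ≠ 0) :
    Real.cot (InnerProductGeometry.angle (-f + t • v) v) = t * ‖v‖ / ‖f‖ := by
  have hFn : (0:ℝ) < ‖f‖ := norm_pos_iff.mpr hf
  have hVn : (0:ℝ) < ‖v‖ := norm_pos_iff.mpr hv
  set x : E := -f + t • v with hx
  have hinner : ⟪x, v⟫ = t * ‖v‖ ^ 2 := by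
    simp [hx, inner_add_left, inner_smul_left, inner_neg_left, hfv,
      real_inner_self_eq_norm_sq]
  have hxx : ⟪x, x⟫ = ‖f‖ ^ 2 + t ^ 2 * ‖v‖ ^ 2 := by
    have hvf : ⟪v, f⟫ = 0 := by rw [real_inner_comm]; exact hfv
    rw [hx]
    simp only [inner_add_left, inner_add_right, real_inner_smul_left, real_inner_smul_right,
      inner_neg_left, inner_neg_right, hfv, hvf, real_inner_self_eq_norm_sq, norm_smul, mul_pow,
      Real.norm_eq_abs, sq_abs]
    ring
  have hxn : ‖x‖ ^ 2 = ‖f‖ ^ 2 + t ^ 2 * ‖v‖ ^ 2 := by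
    rw [← real_inner_self_eq_norm_sq]; exact hxx
  have hXn : (0:ℝ) < ‖x‖ := by
    have h2 : (0:ℝ) < ‖x‖ ^ 2 := by rw [hxn]; positivity
    nlinarith [norm_nonneg x]
  have hsin : Real.sin (InnerProductGeometry.angle x v) = ‖f‖ / ‖x‖ := by
    have h := InnerProductGeometry.sin_angle_mul_norm_mul_norm x v
    have hval : ⟪x, x⟫ * ⟪v, v⟫ - ⟪x, v⟫ * ⟪x, v⟫ = (‖f‖ * ‖v‖) ^ 2 := by
      rw [hxx, hinner, real_inner_self_eq_norm_sq]; ring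
    rw [hval, Real.sqrt_sq (by positivity)] at h
    have h' : Real.sin (InnerProductGeometry.angle x v) * ‖x‖ * ‖v‖ = ‖f‖ * ‖v‖ := by
      rw [mul_assoc]; exact h
    have h2 := mul_right_cancel₀ (ne_of_gt hVn) h'
    rw [eq_div_iff (ne_of_gt hXn)]
    exact h2
  have hcos : Real.cos (InnerProductGeometry.angle x v) = t * ‖v‖ ^ 2 / (‖x‖ * ‖v‖) := by
    rw [InnerProductGeometry.cos_angle, hinner]
  rw [Real.cot_eq_cos_div_sin, hcos, hsin]
  field_simp

/-- For a nondegenerate triangle `xi xj xk` in a real inner product space, with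
`t_jk = (xf - xi) / ‖xf - xi‖` the outward unit edge-perpendicular vector of the edge
`(xj, xk)` (where `xf` is the orthogonal projection of `xi` onto the line through `xj`
and `xk`) and `l_jk = ‖xj - xk‖`, the cotangent identity holds:
`l_jk • t_jk = cot α_k • (xj - xi) + cot α_j • (xk - xi)`, where `α_j = ∠ xi xj xk` and
`α_k = ∠ xi xk xj` are the interior angles at `xj` and `xk`. -/
theorem edge_perpendicular_cotangent_identity
    {E : Type*} [NormedAddCommGroup E] [InnerProductSpace ℝ E]
    (xi xj xk xf : E)
    (hind : AffineIndependent ℝ ![xi, xj, xk])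
    (hmem : xf ∈ affineSpan ℝ {xj, xk})
    (hperp : ⟪xi - xf, xk - xj⟫ = 0) :
    ‖xj - xk‖ • (‖xf - xi‖⁻¹ • (xf - xi)) =
      Real.cot (∠ xi xk xj) • (xj - xi) + Real.cot (∠ xi xj xk) • (xk - xi) := by
  -- extract the parameter t with xf = xj + t • (xk - xj)
  have hmem' : (xf - xj) +ᵥ xj ∈ line[ℝ, xj, xk] := by
    simpa using hmem
  obtain ⟨t, ht⟩ := vadd_left_mem_affineSpan_pair.mp hmem'
  rw [vsub_eq_sub] at ht
  set v : E := xk - xj with hv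
  set f : E := xf - xi with hf
  have hfv : ⟪f, v⟫ = 0 := by
    have : ⟪-(f), v⟫ = 0 := by
      simpa [hf, hv, neg_sub] using hperp
    simpa [inner_neg_left, neg_eq_zero] using this
  -- nondegeneracy
  have hvne : v ≠ 0 := by
    intro h
    have hjk : xj ≠ xk := by
      intro hjk
      have h12 : (1 : Fin 3) = 2 := hind.injective (by simpa using hjk)
      simp at h12
    exact hjk (by rw [sub_eq_zero] at h; exact h.symm)
  have hfne : f ≠ 0 := by
    intro h
    have hxfxi : xf = xi := by rwa [hf, sub_eq_zero] at h
    have hni := hind.notMem_affineSpan_diff 0 Set.univ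
    apply hni
    have himg : (![xi, xj, xk] '' (Set.univ \ {0})) = {xj, xk} := by
      ext p
      constructor
      · rintro ⟨i, hi, rfl⟩
        fin_cases i
        · simp at hi
        · exact Set.mem_insert _ _
        · exact Set.mem_insert_of_mem _ rfl
      · rintro (rfl | rfl)
        · exact ⟨1, by simp, rfl⟩
        · exact ⟨2, by simp, rfl⟩
    rw [himg]
    simpa using hxfxi ▸ hmem
  -- decompositions
  have hxf : xf = t • v + xj := by rw [← sub_eq_iff_eq_add]; exact ht.symm
  have hxij : xi - xj = -f + t • v := by rw [hf, hxf]; module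
  have hxik : xi - xk = -f + (1 - t) • (-v) := by
    rw [hf, hxf, hv]; module
  -- cotangent values
  have hcotj : Real.cot (∠ xi xj xk) = t * ‖v‖ / ‖f‖ := by
    have : ∠ xi xj xk = InnerProductGeometry.angle (-f + t • v) v := by
      rw [EuclideanGeometry.angle, vsub_eq_sub, vsub_eq_sub, ← hxij, ← hv]
    rw [this]
    exact cot_angle_formula f v t hfv hfne hvne
  have hcotk : Real.cot (∠ xi xk xj) = (1 - t) * ‖v‖ / ‖f‖ := by
    have hfv' : ⟪f, -v⟫ = 0 := by simp [inner_neg_right, hfv]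
    have : ∠ xi xk xj = InnerProductGeometry.angle (-f + (1 - t) • (-v)) (-v) := by
      rw [EuclideanGeometry.angle, vsub_eq_sub, vsub_eq_sub, ← hxik]
      congr 1
      rw [hv]; abel
    rw [this, cot_angle_formula f (-v) (1 - t) hfv' hfne (by simpa using hvne),
      norm_neg]
  -- final algebra
  have hlhs1 : xj - xk = -v := by rw [hv]; abel
  have hji : xj - xi = f - t • v := by rw [hf, hxf]; module
  have hki : xk - xi = f + (1 - t) • v := by rw [hf, hxf, hv]; module
  rw [hlhs1, hji, hki, hcotj, hcotk, norm_neg]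
  have hFn : (0:ℝ) < ‖f‖ := norm_pos_iff.mpr hfne
  match_scalars <;> field_simp <;> ring
end

section
/- Let x₀ be a point in a real inner product space and let x₁, …, x_n (n ≥ 3, indices taken modulo n) be points such that for every m the triple (x₀, x_m, x_{m+1}) is affinely independent (a closed triangle fan around x₀). For each m let t_m be the outward unit edge-perpendicular vector of the edge (x_m, x_{m+1}) in the triangle (x₀, x_m, x_{m+1}), i.e., t_m = (f_m − x₀)/‖f_m − x₀‖ with f_m the orthogonal projection of x₀ onto the line through x_m and x_{m+1}, and let l_m = ‖x_m − x_{m+1}‖. Then the element-wise sum equals the cotangent edge-wise sum: ∑_{m=1}^{n} l_m • t_m = − ∑_{m=1}^{n} ( cot ∠(x₀, x_{m−1}, x_m) + cot ∠(x₀, x_{m+1}, x_m) ) • (x₀ − x_m), where ∠(a, b, c) denotes the Euclidean angle at b between a − b and c − b and cot α = cos α / sin α. -/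
open EuclideanGeometry RealInnerProductSpace

section Aux
variable {E : Type*} [NormedAddCommGroup E] [InnerProductSpace ℝ E]

lemma cot_angle_aux (p q : E) (hG : 0 < ‖p‖ ^ 2 * ‖q‖ ^ 2 - ⟪p, q⟫ ^ 2) :
    Real.cot (InnerProductGeometry.angle p q) =
      ⟪p, q⟫ / Real.sqrt (‖p‖ ^ 2 * ‖q‖ ^ 2 - ⟪p, q⟫ ^ 2) := by
  have hp : ‖p‖ ≠ 0 := by
    intro h; rw [h] at hG; nlinarith [sq_nonneg ⟪p, q⟫]
  have hq : ‖q‖ ≠ 0 := by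
    intro h; rw [h] at hG; nlinarith [sq_nonneg ⟪p, q⟫]
  have hpq : 0 < ‖p‖ * ‖q‖ :=
    mul_pos ((norm_nonneg p).lt_of_ne' hp) ((norm_nonneg q).lt_of_ne' hq)
  have hsin : Real.sin (InnerProductGeometry.angle p q) * (‖p‖ * ‖q‖) =
      Real.sqrt (‖p‖ ^ 2 * ‖q‖ ^ 2 - ⟪p, q⟫ ^ 2) := by
    rw [InnerProductGeometry.sin_angle_mul_norm_mul_norm]
    congr 1
    rw [real_inner_self_eq_norm_sq, real_inner_self_eq_norm_sq]
    ring
  have hsqrt : 0 < Real.sqrt (‖p‖ ^ 2 * ‖q‖ ^ 2 - ⟪p, q⟫ ^ 2) := Real.sqrt_pos.2 hG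
  have hsin' : Real.sin (InnerProductGeometry.angle p q) =
      Real.sqrt (‖p‖ ^ 2 * ‖q‖ ^ 2 - ⟪p, q⟫ ^ 2) / (‖p‖ * ‖q‖) := by
    field_simp at hsin ⊢; linarith
  rw [Real.cot_eq_cos_div_sin, InnerProductGeometry.cos_angle, hsin']
  field_simp

lemma fan_element (x₀ a b f : E)
    (hind : AffineIndependent ℝ ![x₀, a, b])
    (hmem : f ∈ affineSpan ℝ {a, b})
    (hperp : ⟪x₀ - f, b - a⟫ = 0) :
    ‖a - b‖ • (‖f - x₀‖⁻¹ • (f - x₀)) =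
      -(Real.cot (∠ x₀ b a) • (x₀ - a)) + -(Real.cot (∠ x₀ a b) • (x₀ - b)) := by
  have hab : a ≠ b := by
    intro h
    have : (1 : Fin 3) = 2 := hind.injective (by simp [h])
    simp at this
  have hx₀ : x₀ ∉ affineSpan ℝ {a, b} := by
    intro h
    exact (affineIndependent_iff_not_collinear_set.1 hind)
      (collinear_insert_of_mem_affineSpan_pair h)
  have hfx₀ : f ≠ x₀ := fun h => hx₀ (h ▸ hmem)
  obtain ⟨r, hr⟩ := vadd_left_mem_affineSpan_pair.1
      (show (f - a) +ᵥ a ∈ affineSpan ℝ {a, b} by simpa using hmem)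
  rw [vsub_eq_sub] at hr
  set u : E := a - x₀ with hu
  set v : E := b - x₀ with hv
  have hvu : b - a = v - u := by rw [hu, hv]; abel
  have hfx : f - x₀ = u + r • (v - u) := by
    have h1 : f - x₀ = (f - a) + (a - x₀) := by abel
    rw [h1, ← hr, hvu, ← hu]; abel
  have hcom : ⟪v, u⟫ = ⟪u, v⟫ := real_inner_comm u v
  set L : ℝ := ‖a - b‖ with hLdef
  set H : ℝ := ‖f - x₀‖ with hHdef
  have hLpos : 0 < L := by
    rw [hLdef, norm_pos_iff]; exact sub_ne_zero.2 hab
  have hHpos : 0 < H := by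
    rw [hHdef, norm_pos_iff]; exact sub_ne_zero.2 hfx₀
  have hL2 : L ^ 2 = ⟪u, u⟫ + ⟪v, v⟫ - 2 * ⟪u, v⟫ := by
    rw [hLdef, ← real_inner_self_eq_norm_sq]
    have : a - b = u - v := by rw [hu, hv]; abel
    rw [this]
    simp only [inner_sub_left, inner_sub_right, hcom]
    ring
  have hrL : r * L ^ 2 = ⟪u, u⟫ - ⟪u, v⟫ := by
    have h1 : x₀ - f = -(u + r • (v - u)) := by rw [← hfx]; abel
    rw [h1, hvu] at hperp
    simp only [inner_neg_left, inner_add_left, inner_sub_left, inner_sub_right,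
      real_inner_smul_left, hcom] at hperp
    rw [hL2]; linarith [hperp]
  have hHL : H ^ 2 * L ^ 2 = ⟪u, u⟫ * ⟪v, v⟫ - ⟪u, v⟫ ^ 2 := by
    have h2 : H ^ 2 = ⟪f - x₀, f - x₀⟫ := by
      rw [hHdef, ← real_inner_self_eq_norm_sq]
    have hr2 : r * (⟪u, u⟫ + ⟪v, v⟫ - 2 * ⟪u, v⟫) = ⟪u, u⟫ - ⟪u, v⟫ := by
      rw [← hL2]; exact hrL
    rw [h2, hfx, hL2]
    simp only [inner_add_left, inner_add_right, inner_sub_left, inner_sub_right,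
      real_inner_smul_left, real_inner_smul_right, hcom]
    linear_combination (r * (⟪u, u⟫ + ⟪v, v⟫ - 2 * ⟪u, v⟫) - (⟪u, u⟫ - ⟪u, v⟫)) * hr2
  have hG : 0 < ⟪u, u⟫ * ⟪v, v⟫ - ⟪u, v⟫ ^ 2 := by
    rw [← hHL]; positivity
  have hsqrtG : Real.sqrt (⟪u, u⟫ * ⟪v, v⟫ - ⟪u, v⟫ ^ 2) = H * L := by
    rw [← hHL, ← mul_pow, Real.sqrt_sq (by positivity)]
  have hxa : x₀ - a = -u := by rw [hu]; abel
  have hxb : x₀ - b = -v := by rw [hv]; abel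
  have hcot1 : Real.cot (∠ x₀ b a) = (⟪v, v⟫ - ⟪u, v⟫) / (H * L) := by
    have hab' : ∠ x₀ b a = InnerProductGeometry.angle (-v) (u - v) := by
      simp only [EuclideanGeometry.angle, vsub_eq_sub, hxb,
        show a - b = u - v from by rw [hu, hv]; abel]
    have hgram : ‖(-v : E)‖ ^ 2 * ‖u - v‖ ^ 2 - ⟪(-v : E), u - v⟫ ^ 2 =
        ⟪u, u⟫ * ⟪v, v⟫ - ⟪u, v⟫ ^ 2 := by
      have e1 : ‖(-v : E)‖ ^ 2 = ⟪v, v⟫ := by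
        rw [norm_neg, ← real_inner_self_eq_norm_sq]
      have e2 : ‖u - v‖ ^ 2 = ⟪u, u⟫ + ⟪v, v⟫ - 2 * ⟪u, v⟫ := by
        rw [← real_inner_self_eq_norm_sq]
        simp only [inner_sub_left, inner_sub_right, hcom]; ring
      have e3 : ⟪(-v : E), u - v⟫ = ⟪v, v⟫ - ⟪u, v⟫ := by
        simp only [inner_neg_left, inner_sub_right, hcom]; ring
      rw [e1, e2, e3]; ring
    rw [hab', cot_angle_aux _ _ (by rw [hgram]; exact hG), hgram, hsqrtG]
    congr 1
    simp only [inner_neg_left, inner_sub_right, hcom]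
    try ring
  have hcot2 : Real.cot (∠ x₀ a b) = (⟪u, u⟫ - ⟪u, v⟫) / (H * L) := by
    have hab' : ∠ x₀ a b = InnerProductGeometry.angle (-u) (v - u) := by
      simp only [EuclideanGeometry.angle, vsub_eq_sub, hxa, hvu]
    have hgram : ‖(-u : E)‖ ^ 2 * ‖v - u‖ ^ 2 - ⟪(-u : E), v - u⟫ ^ 2 =
        ⟪u, u⟫ * ⟪v, v⟫ - ⟪u, v⟫ ^ 2 := by
      have e1 : ‖(-u : E)‖ ^ 2 = ⟪u, u⟫ := by
        rw [norm_neg, ← real_inner_self_eq_norm_sq]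
      have e2 : ‖v - u‖ ^ 2 = ⟪u, u⟫ + ⟪v, v⟫ - 2 * ⟪u, v⟫ := by
        rw [← real_inner_self_eq_norm_sq]
        simp only [inner_sub_left, inner_sub_right, hcom]; ring
      have e3 : ⟪(-u : E), v - u⟫ = ⟪u, u⟫ - ⟪u, v⟫ := by
        simp only [inner_neg_left, inner_sub_right, hcom]; ring
      rw [e1, e2, e3]; ring
    rw [hab', cot_angle_aux _ _ (by rw [hgram]; exact hG), hgram, hsqrtG]
    congr 1
    simp only [inner_neg_left, inner_sub_right, hcom]
    try ring
  rw [hcot1, hcot2, hxa, hxb, hfx]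
  match_scalars
  · field_simp
    linear_combination hL2 - hrL
  · field_simp
    linear_combination (-1 : ℝ) * hL2
  · field_simp
    linear_combination hrL
end Aux


/-- For a closed triangle fan around a vertex `x₀` with neighbors `x 1, …, x n` indexed
cyclically by `ZMod n` (`n ≥ 3`), each element `(x₀, x m, x (m+1))` nondegenerate, with
`t m = (f m - x₀)/‖f m - x₀‖` the outward unit edge-perpendicular of the edge opposite `x₀`
in element `m` (where `f m` is the orthogonal projection of `x₀` onto the line through `x m`
and `x (m+1)`) and `l m = ‖x m - x (m+1)‖`, the element-wise sum equals the cotangent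
edge-wise sum:
`∑ m, l m • t m = -∑ m, (cot ∠(x₀, x (m-1), x m) + cot ∠(x₀, x (m+1), x m)) • (x₀ - x m)`. -/
theorem fan_elementwise_sum_eq_cotangent_sum
    {E : Type*} [NormedAddCommGroup E] [InnerProductSpace ℝ E]
    (n : ℕ) [NeZero n] (hn : 3 ≤ n)
    (x₀ : E) (x f : ZMod n → E)
    (hind : ∀ m : ZMod n, AffineIndependent ℝ ![x₀, x m, x (m + 1)])
    (hmem : ∀ m : ZMod n, f m ∈ affineSpan ℝ {x m, x (m + 1)})
    (hperp : ∀ m : ZMod n, ⟪x₀ - f m, x (m + 1) - x m⟫ = 0) :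
    ∑ m : ZMod n, ‖x m - x (m + 1)‖ • (‖f m - x₀‖⁻¹ • (f m - x₀)) =
      -∑ m : ZMod n,
        (Real.cot (∠ x₀ (x (m - 1)) (x m)) + Real.cot (∠ x₀ (x (m + 1)) (x m))) •
          (x₀ - x m) := by
  calc ∑ m : ZMod n, ‖x m - x (m + 1)‖ • (‖f m - x₀‖⁻¹ • (f m - x₀))
      = ∑ m : ZMod n, (-(Real.cot (∠ x₀ (x (m + 1)) (x m)) • (x₀ - x m)) +
          -(Real.cot (∠ x₀ (x m) (x (m + 1))) • (x₀ - x (m + 1)))) :=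
        Finset.sum_congr rfl fun m _ =>
          fan_element x₀ (x m) (x (m + 1)) (f m) (hind m) (hmem m) (hperp m)
    _ = ∑ m : ZMod n, -(Real.cot (∠ x₀ (x (m + 1)) (x m)) • (x₀ - x m)) +
        ∑ m : ZMod n, -(Real.cot (∠ x₀ (x m) (x (m + 1))) • (x₀ - x (m + 1))) :=
        Finset.sum_add_distrib
    _ = ∑ m : ZMod n, -(Real.cot (∠ x₀ (x (m + 1)) (x m)) • (x₀ - x m)) +
        ∑ m : ZMod n, -(Real.cot (∠ x₀ (x (m - 1)) (x m)) • (x₀ - x m)) := by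
        congr 1
        refine (Fintype.sum_equiv (Equiv.subRight (1 : ZMod n)) _ _ fun m => ?_).symm
        simp [Equiv.subRight, sub_add_cancel]
    _ = -∑ m : ZMod n,
        (Real.cot (∠ x₀ (x (m - 1)) (x m)) + Real.cot (∠ x₀ (x (m + 1)) (x m))) •
          (x₀ - x m) := by
        rw [← Finset.sum_add_distrib, ← Finset.sum_neg_distrib]
        exact Finset.sum_congr rfl fun m _ => by rw [add_smul]; abel
end
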